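/- For a diagonal Gaussian Q = N(μ, diag(σ²)) and standard Gaussian prior P = N(0, I), the vector of standard deviations σ satisfies ‖σ − 1‖₂² ≤ 2 KL(Q, P). -/
import Mathlib


/-- The KL divergence between a diagonal Gaussian `Q = N(μ, diag(σ²))` and the standard
Gaussian `P = N(0, I)` on `ℝ^I`: `KL(Q,P) = (1/2)(‖μ‖₂² + Σᵢ (σᵢ² - 1 - log σᵢ²))`. -/
noncomputable def klGauss {I : ℕ} (μ σ : Fin I → ℝ) : ℝ :=
  (1 / 2) * (∑ i, (μ i) ^ 2 + ∑ i, ((σ i) ^ 2 - 1 - Real.log ((σ i) ^ 2)))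

/-- For a diagonal Gaussian `Q = N(μ, diag(σ²))` and standard Gaussian prior `P = N(0, I)`,
the vector of standard deviations `σ` satisfies `‖σ - 1‖₂² ≤ 2 KL(Q, P)`. -/
theorem stmt_2 {I : ℕ} (μ σ : Fin I → ℝ) (hσ : ∀ i, 0 < σ i) :
    ∑ i, (σ i - 1) ^ 2 ≤ 2 * klGauss μ σ := by
  have h1 : ∑ i, (σ i - 1) ^ 2 ≤ ∑ i, ((σ i) ^ 2 - 1 - Real.log ((σ i) ^ 2)) := by
    apply Finset.sum_le_sum
    intro i _
    have hlog : Real.log (σ i) ≤ σ i - 1 := Real.log_le_sub_one_of_pos (hσ i)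
    have : Real.log ((σ i) ^ 2) = 2 * Real.log (σ i) := by
      rw [Real.log_pow]; ring
    rw [this]; nlinarith
  have h2 : (0:ℝ) ≤ ∑ i, (μ i) ^ 2 := Finset.sum_nonneg fun i _ => sq_nonneg _
  unfold klGauss
  linarith
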